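/- arXiv:2412.07044 — 2 statements merged into one kernel-verified Lean document; each statement's English description precedes it below -/
import Mathlib

section
/- For every exceptional simple Lie algebra g (of type E_6, E_7, E_8, F_4, or G_2) and every integer t with 1 ≤ t ≤ rk(g), the inequality t ≤ (dim g - t - D^{ss}(rk g - t)) / (rk g + 1) holds, where D^{ss}(l) is the maximal dimension of a semisimple Lie algebra of rank l (with D^{ss}(0) = 0, and D^{ss}(l) = 3, 14, 21, 52, 55, 78, 133 for l = 1,...,7), and (rk, dim) is (6,78), (7,133), (8,248), (4,52), (2,14) respectively. -/
/-- `Dss l`: the maximal dimension of a semisimple Lie algebra of rank `l ≤ 7`,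
with `Dss 0 = 0` by convention. -/
def Dss : ℕ → ℕ
  | 0 => 0
  | 1 => 3
  | 2 => 14
  | 3 => 21
  | 4 => 52
  | 5 => 55
  | 6 => 78
  | 7 => 133
  | _ => 0

/-- For every exceptional simple Lie algebra `g` with `(rk, dim)` among
`(6,78), (7,133), (8,248), (4,52), (2,14)` and every `1 ≤ t ≤ rk`,
we have `t ≤ (dim g - t - Dss(rk g - t))/(rk g + 1)`. -/
theorem exceptional_estimate (rk d : ℕ)
    (h : (rk, d) = (6, 78) ∨ (rk, d) = (7, 133) ∨ (rk, d) = (8, 248) ∨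
         (rk, d) = (4, 52) ∨ (rk, d) = (2, 14)) :
    ∀ t : ℕ, 1 ≤ t → t ≤ rk →
      (t : ℚ) ≤ ((d : ℚ) - t - Dss (rk - t)) / (rk + 1) := by
  rcases h with h|h|h|h|h <;>
    obtain ⟨rfl, rfl⟩ := Prod.mk.injEq .. ▸ h <;>
    intro t h1 h2 <;> interval_cases t <;>
    norm_num [Dss]
end

section
/- Let a_1, ..., a_k and N_0 be nonnegative integers with N_i := a_i ≥ 1 and N_1 + ... + N_k + N_0 = l, and k < l. Then Σ_{i=1}^k N_i^2 + 2N_0^2 + N_0 ≤ 2(l-k)^2 + l, with the maximum attained at N_1 = ... = N_k = 1, N_0 = l - k. -/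
lemma sum_sq_le_sq_sum {ι : Type*} (s : Finset ι) (f : ι → ℕ) :
    ∑ i ∈ s, f i ^ 2 ≤ (∑ i ∈ s, f i) ^ 2 := by
  induction s using Finset.cons_induction with
  | empty => simp
  | cons a s ha ih =>
    rw [Finset.sum_cons, Finset.sum_cons]
    nlinarith [ih, Nat.zero_le (∑ i ∈ s, f i), Nat.zero_le (f a)]

/-- The optimization bounding `dim h` in the `C_l` and `B_l` cases: if `N₁, ..., N_k ≥ 1`
and `N₀ ≥ 0` satisfy `N₁ + ... + N_k + N₀ = l` with `k < l`, then
`Σ Nᵢ² + 2N₀² + N₀ ≤ 2(l-k)² + l`, with the maximum attained at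
`N₁ = ... = N_k = 1`, `N₀ = l - k`. -/
theorem typeBC_optimization (k l : ℕ) (hkl : k < l) (N : Fin k → ℕ) (N0 : ℕ)
    (hpos : ∀ i, 1 ≤ N i) (hsum : (∑ i, N i) + N0 = l) :
    (∑ i, (N i) ^ 2) + 2 * N0 ^ 2 + N0 ≤ 2 * (l - k) ^ 2 + l ∧
    ((∀ i, N i = 1) → N0 = l - k →
      (∑ i, (N i) ^ 2) + 2 * N0 ^ 2 + N0 = 2 * (l - k) ^ 2 + l) := by
  have hk : k ≤ ∑ i, N i := by
    calc k = ∑ _i : Fin k, 1 := by simp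
    _ ≤ ∑ i, N i := Finset.sum_le_sum fun i _ => hpos i
  have hN0 : N0 ≤ l - k := by omega
  set m := l - k with hm
  have hl : l = k + m := by omega
  -- decompose N i = (N i - 1) + 1
  have hsq : (∑ i, (N i) ^ 2) = (∑ i, (N i - 1) ^ 2) + 2 * (∑ i, (N i - 1)) + k := by
    have : ∀ i : Fin k, (N i) ^ 2 = (N i - 1) ^ 2 + 2 * (N i - 1) + 1 := by
      intro i; have := hpos i; nlinarith [Nat.sub_add_cancel this]
    simp [this, Finset.sum_add_distrib, Finset.mul_sum]
  have hts : (∑ i, (N i - 1)) = m - N0 := by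
    have : (∑ i, (N i - 1)) + k = ∑ i, N i := by
      calc (∑ i, (N i - 1)) + k = ∑ i : Fin k, ((N i - 1) + 1) := by
            simp [Finset.sum_add_distrib]
      _ = ∑ i, N i := by
            apply Finset.sum_congr rfl; intro i _; have := hpos i; omega
    omega
  have key := sum_sq_le_sq_sum Finset.univ (fun i => N i - 1)
  rw [hts] at key
  constructor
  · set y := m - N0 with hy
    have hym : y + N0 = m := by omega
    have h1 : (∑ i, (N i) ^ 2) ≤ y ^ 2 + 2 * y + k := by
      rw [hsq, hts]; nlinarith [key]
    nlinarith [h1, hym]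
  · intro h1 h0
    have : (∑ i, (N i) ^ 2) = k := by simp [h1]
    rw [this, h0]
    have hm1 : 1 ≤ m := by omega
    nlinarith
end
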